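/- Suppose v ∈ ℝ^d is componentwise non-negative, not identically zero, and satisfies Cv = λv for some real λ ≥ 1. Then the set S = {j ∈ {1,…,d} : v_j > 0} is an autocatalytic set of the directed graph G. -/
import Mathlib

open Matrix Finset

/-- If `v` is a componentwise non-negative, nonzero eigenvector of
`C` with real eigenvalue `λ ≥ 1`, then the support `S = {j : v j > 0}` is an
autocatalytic set: it is nonempty and every `i ∈ S` has an incoming edge
`C i j = 1` from some `j ∈ S` with `j ≠ i`. -/
theorem eigenvector_support_is_ACS
    (d : ℕ) (hd : 2 ≤ d)
    (C : Matrix (Fin d) (Fin d) ℝ)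
    (hC01 : ∀ i j, C i j = 0 ∨ C i j = 1)
    (hCdiag : ∀ j, C j j = 0)
    (v : Fin d → ℝ) (lam : ℝ)
    (hvpos : ∀ j, 0 ≤ v j) (hvne : v ≠ 0) (hlam : 1 ≤ lam)
    (heig : C.mulVec v = lam • v) :
    ({j : Fin d | 0 < v j}).Nonempty ∧
      ∀ i ∈ {j : Fin d | 0 < v j}, ∃ j ∈ {j : Fin d | 0 < v j}, j ≠ i ∧ C i j = 1 := by
  constructor
  · by_contra h
    apply hvne
    funext j
    have := hvpos j
    have : ¬ (0 < v j) := fun hj => h ⟨j, hj⟩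
    simp; linarith
  · intro i hi
    have hvi : 0 < v i := hi
    have hsum : 0 < ∑ j, C i j * v j := by
      have : (C.mulVec v) i = lam * v i := by rw [heig]; rfl
      rw [Matrix.mulVec, dotProduct] at this
      rw [this]
      nlinarith
    obtain ⟨j, -, hj⟩ := Finset.exists_lt_of_sum_lt (f := fun _ : Fin d => (0:ℝ))
      (by simpa using hsum)
    have hCij : C i j = 1 := by
      rcases hC01 i j with h0 | h1
      · rw [h0] at hj; simp at hj
      · exact h1
    have hvj : 0 < v j := by
      rw [hCij, one_mul] at hj; exact hj
    refine ⟨j, hvj, ?_, hCij⟩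
    intro hji
    rw [hji, hCdiag] at hCij
    norm_num at hCij
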